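/- Let D be a digraph of order n ≥ 3 containing a path P = x_1 x_2 … x_m with 2 ≤ m ≤ n−1, and let x be a vertex not on P. If d(x,P) ≥ m+2, then there exists i ∈ [1, m−1] such that both x_i x and x x_{i+1} are arcs of D; in particular D contains the path x_1 … x_i x x_{i+1} … x_m of length m. -/

import Mathlib

open Finset

/-- A list of distinct vertices whose consecutive members are joined by arcs. -/
def IsPathList {V : Type*} (A : V → V → Prop) (p : List V) : Prop :=
  p.Nodup ∧ p.Chain' A

/-- A directed cycle: at least two distinct vertices, consecutive arcs, and an arc
from the last vertex back to the first. -/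
def IsCycleList {V : Type*} (A : V → V → Prop) (c : List V) : Prop :=
  2 ≤ c.length ∧ c.Nodup ∧ c.Chain' A ∧ ∀ h : c ≠ [], A (c.getLast h) (c.head h)

/-- A Hamiltonian bypass: a Hamiltonian path `v₁ v₂ … vₙ` together with the arc `v₁ vₙ`. -/
def HasHamBypass {V : Type*} (A : V → V → Prop) : Prop :=
  ∃ l : List V, l.Nodup ∧ (∀ v, v ∈ l) ∧ l.Chain' A ∧
    ∀ h : l ≠ [], A (l.head h) (l.getLast h)

/-- A Hamiltonian cycle. -/
def HasHamCycle {V : Type*} (A : V → V → Prop) : Prop :=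
  ∃ c : List V, IsCycleList A c ∧ ∀ v, v ∈ c

/-- out-degree of `x` towards a set `S`. -/
def outDegOn {V : Type*} [DecidableEq V] (A : V → V → Prop) [DecidableRel A]
    (x : V) (S : Finset V) : ℕ := (S.filter fun y => A x y).card

/-- in-degree of `x` from a set `S`. -/
def inDegOn {V : Type*} [DecidableEq V] (A : V → V → Prop) [DecidableRel A]
    (x : V) (S : Finset V) : ℕ := (S.filter fun y => A y x).card

/-- degree of `x` with respect to a set `S` (arcs in both directions). -/
def degOn {V : Type*} [DecidableEq V] (A : V → V → Prop) [DecidableRel A]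
    (x : V) (S : Finset V) : ℕ := outDegOn A x S + inDegOn A x S

/-- out-degree of `x`. -/
def outDeg {V : Type*} [Fintype V] [DecidableEq V] (A : V → V → Prop) [DecidableRel A]
    (x : V) : ℕ := outDegOn A x Finset.univ

/-- in-degree of `x`. -/
def inDeg {V : Type*} [Fintype V] [DecidableEq V] (A : V → V → Prop) [DecidableRel A]
    (x : V) : ℕ := inDegOn A x Finset.univ

/-- degree of `x`. -/
def deg {V : Type*} [Fintype V] [DecidableEq V] (A : V → V → Prop) [DecidableRel A]
    (x : V) : ℕ := outDeg A x + inDeg A x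

/-- The condition `A_k` of Manoussakis: for every triple of distinct vertices `x, y, z`
with `x` and `y` non-adjacent, if `xz` is not an arc then
`d(x)+d(y)+d⁺(x)+d⁻(z) ≥ 3n-2+k`, and if `zx` is not an arc then
`d(x)+d(y)+d⁻(x)+d⁺(z) ≥ 3n-2+k`. -/
def CondA {V : Type*} [Fintype V] [DecidableEq V] (A : V → V → Prop) [DecidableRel A]
    (k : ℤ) : Prop :=
  ∀ x y z : V, x ≠ y → z ≠ x → z ≠ y → ¬A x y → ¬A y x →
    (¬A x z → (deg A x + deg A y + outDeg A x + inDeg A z : ℤ) ≥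
      3 * (Fintype.card V : ℤ) - 2 + k) ∧
    (¬A z x → (deg A x + deg A y + inDeg A x + outDeg A z : ℤ) ≥
      3 * (Fintype.card V : ℤ) - 2 + k)


/-- Lemma 2(i). -/
theorem stmt1 {V : Type*} [Fintype V] [DecidableEq V] (A : V → V → Prop) [DecidableRel A]
    (hirr : ∀ v, ¬A v v) (hn : 3 ≤ Fintype.card V)
    (p : List V) (hp : IsPathList A p)
    (hm2 : 2 ≤ p.length) (hm3 : p.length ≤ Fintype.card V - 1)
    (x : V) (hx : x ∉ p)
    (hd : p.length + 2 ≤ degOn A x p.toFinset) :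
    ∃ i : ℕ, ∃ h : i + 1 < p.length,
      (A (p.get ⟨i, Nat.lt_of_succ_lt h⟩) x ∧ A x (p.get ⟨i + 1, h⟩)) ∧
      ∃ q : List V, IsPathList A q ∧ q.toFinset = insert x p.toFinset ∧
        q.head? = p.head? ∧ q.getLast? = p.getLast? := by
  obtain ⟨hnd, hch⟩ := hp
  have key : ∃ i : ℕ, ∃ h : i + 1 < p.length,
      A (p.get ⟨i, Nat.lt_of_succ_lt h⟩) x ∧ A x (p.get ⟨i + 1, h⟩) := by
    by_contra hcon
    push_neg at hcon
    set m := p.length with hm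
    obtain ⟨n, hmn⟩ : ∃ n, m = n + 1 := ⟨m - 1, by omega⟩
    set a : ℕ → ℕ := fun i => if h : i < m then (if A x p[i] then 1 else 0) else 0 with ha
    set b : ℕ → ℕ := fun i => if h : i < m then (if A p[i] x then 1 else 0) else 0 with hb
    have hdeg : degOn A x p.toFinset = ∑ i ∈ Finset.range m, (b i + a i) := by
      unfold degOn outDegOn inDegOn
      rw [Finset.card_filter, Finset.card_filter, List.sum_toFinset _ hnd,
        List.sum_toFinset _ hnd,
        ← Fin.sum_univ_fun_getElem p (fun y => if A x y then 1 else 0),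
        ← Fin.sum_univ_fun_getElem p (fun y => if A y x then 1 else 0), ← Finset.sum_add_distrib,
        ← Fin.sum_univ_eq_sum_range (fun i => b i + a i) m]
      apply Finset.sum_congr rfl
      intro i _
      simp [ha, hb, i.isLt]
      ring
    have hsum : ∑ i ∈ Finset.range m, (b i + a i)
        = (a 0 + b n) + ∑ i ∈ Finset.range n, (b i + a (i + 1)) := by
      rw [Finset.sum_add_distrib, Finset.sum_add_distrib, hmn,
        Finset.sum_range_succ (fun i => b i), Finset.sum_range_succ' (fun i => a i)]
      ring
    have hbound : ∀ i ∈ Finset.range n, b i + a (i + 1) ≤ 1 := by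
      intro i hi
      rw [Finset.mem_range] at hi
      have h1 : i + 1 < m := by omega
      have h2 := hcon i h1
      simp only [List.get_eq_getElem] at h2
      simp only [ha, hb, dif_pos h1, dif_pos (Nat.lt_of_succ_lt h1)]
      by_cases hA : A p[i] x <;> by_cases hB : A x p[i+1] <;>
        simp_all
    have ha0 : a 0 ≤ 1 := by
      simp only [ha]; split <;> [skip; exact Nat.zero_le 1]; split <;> omega
    have hbm : b n ≤ 1 := by
      simp only [hb]; split <;> [skip; exact Nat.zero_le 1]; split <;> omega
    have hle := Finset.sum_le_card_nsmul _ _ 1 hbound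
    simp only [Finset.card_range, smul_eq_mul, mul_one] at hle
    omega
  obtain ⟨i, h, hAix, hAxi⟩ := key
  simp only [List.get_eq_getElem] at hAix hAxi
  have hi1 : i + 1 ≤ p.length := Nat.le_of_lt h
  have htd : p.take (i + 1) ++ p.drop (i + 1) = p := List.take_append_drop _ _
  have htlen : (p.take (i + 1)).length = i + 1 := by simp; omega
  have hdne : p.drop (i + 1) ≠ [] := by
    intro hc
    have : (p.drop (i + 1)).length = 0 := by rw [hc]; rfl
    simp at this; omega
  have htne : p.take (i + 1) ≠ [] := by
    intro hc
    have : (p.take (i + 1)).length = 0 := by rw [hc]; rfl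
    omega
  have htlast : (p.take (i + 1)).getLast? = some p[i] := by
    rw [List.getLast?_eq_getElem?, htlen]
    simp only [Nat.add_sub_cancel]
    rw [List.getElem?_take, if_pos (by omega), List.getElem?_eq_getElem (Nat.lt_of_succ_lt h)]
  have hdhead : (p.drop (i + 1)).head? = some p[i + 1] := by
    rw [List.head?_eq_getElem?, List.getElem?_drop]
    rw [List.getElem?_eq_getElem (by omega)]
  refine ⟨i, h, ⟨hAix, hAxi⟩, p.take (i + 1) ++ x :: p.drop (i + 1), ⟨?_, ?_⟩, ?_, ?_, ?_⟩
  · rw [List.nodup_middle, List.nodup_cons, htd]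
    exact ⟨hx, hnd⟩
  · rw [List.Chain', List.isChain_append]
    refine ⟨hch.take _, ?_, ?_⟩
    · rw [List.isChain_cons]
      refine ⟨?_, hch.drop _⟩
      intro y hy
      rw [hdhead, Option.mem_some_iff] at hy
      rwa [← hy]
    · intro u hu v hv
      rw [htlast, Option.mem_some_iff] at hu
      simp only [List.head?_cons, Option.mem_some_iff] at hv
      rw [← hu, ← hv]
      exact hAix
  · simp only [List.toFinset_append, List.toFinset_cons]
    rw [Finset.union_insert, ← List.toFinset_append, htd]
  · rw [List.head?_append_of_ne_nil _ htne]
    conv_rhs => rw [← htd]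
    rw [List.head?_append_of_ne_nil _ htne]
  · rw [List.getLast?_append_cons]
    have : x :: p.drop (i + 1) = [x] ++ p.drop (i + 1) := rfl
    rw [this, List.getLast?_append_of_ne_nil _ hdne]
    conv_rhs => rw [← htd]
    rw [List.getLast?_append_of_ne_nil _ hdne]
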